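/- Let A : [0,1] → Hermitian n×n matrices be continuous and suppose the rank of A(t) is constant in t. Then the number of negative eigenvalues of A(t) (counted with multiplicity) is constant in t. -/

import Mathlib

open Matrix Finset
open scoped ComplexConjugate

namespace Stmt11

variable {n : ℕ}

/-- The (real) quadratic form of a matrix. -/
noncomputable def q (B : Matrix (Fin n) (Fin n) ℂ) (x : EuclideanSpace ℂ (Fin n)) : ℝ :=
  (inner (𝕜 := ℂ) x (Matrix.toEuclideanLin B x)).re

lemma toEuclideanLin_eigenvectorBasis {B : Matrix (Fin n) (Fin n) ℂ} (hB : B.IsHermitian)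
    (i : Fin n) :
    Matrix.toEuclideanLin B (hB.eigenvectorBasis i) =
      (hB.eigenvalues i : ℂ) • hB.eigenvectorBasis i := by
  apply (WithLp.equiv 2 (Fin n → ℂ)).injective
  funext j
  have := congrFun (hB.mulVec_eigenvectorBasis i) j
  simpa [Matrix.toEuclideanLin_apply] using this

lemma repr_toEuclideanLin {B : Matrix (Fin n) (Fin n) ℂ} (hB : B.IsHermitian)
    (x : EuclideanSpace ℂ (Fin n)) (i : Fin n) :
    hB.eigenvectorBasis.repr (Matrix.toEuclideanLin B x) i =
      (hB.eigenvalues i : ℂ) * hB.eigenvectorBasis.repr x i := by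
  have hsym := (Matrix.isHermitian_iff_isSymmetric.mp hB)
  rw [OrthonormalBasis.repr_apply_apply, ← hsym (hB.eigenvectorBasis i) x,
    toEuclideanLin_eigenvectorBasis hB i, inner_smul_left, Complex.conj_ofReal,
    OrthonormalBasis.repr_apply_apply]

lemma q_eq_sum {B : Matrix (Fin n) (Fin n) ℂ} (hB : B.IsHermitian)
    (x : EuclideanSpace ℂ (Fin n)) :
    q B x = ∑ i, hB.eigenvalues i * ‖hB.eigenvectorBasis.repr x i‖ ^ 2 := by
  have h1 : (inner (𝕜 := ℂ) x (Matrix.toEuclideanLin B x)) =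
      ∑ i, conj (hB.eigenvectorBasis.repr x i) *
        ((hB.eigenvalues i : ℂ) * hB.eigenvectorBasis.repr x i) := by
    rw [← hB.eigenvectorBasis.repr.inner_map_map x (Matrix.toEuclideanLin B x)]
    rw [PiLp.inner_apply]
    exact Finset.sum_congr rfl fun i _ => by rw [repr_toEuclideanLin hB x i, RCLike.inner_apply']
  rw [q, h1, Complex.re_sum]
  refine Finset.sum_congr rfl fun i _ => ?_
  set z := hB.eigenvectorBasis.repr x i
  have : conj z * ((hB.eigenvalues i : ℂ) * z) = (hB.eigenvalues i : ℂ) * (‖z‖ ^ 2 : ℝ) := by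
    rw [mul_comm (conj z), mul_assoc, mul_comm z, ← Complex.normSq_eq_conj_mul_self]
    rw [Complex.normSq_eq_norm_sq]
  rw [this, ← Complex.ofReal_mul, Complex.ofReal_re]

/-- Span of the eigenvectors whose eigenvalues satisfy `p`. -/
noncomputable def V {B : Matrix (Fin n) (Fin n) ℂ} (hB : B.IsHermitian) (p : ℝ → Prop)
    [DecidablePred p] : Submodule ℂ (EuclideanSpace ℂ (Fin n)) :=
  Submodule.span ℂ
    (Set.range fun i : {i : Fin n // p (hB.eigenvalues i)} => hB.eigenvectorBasis i)

lemma finrank_V {B : Matrix (Fin n) (Fin n) ℂ} (hB : B.IsHermitian) (p : ℝ → Prop)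
    [DecidablePred p] :
    Module.finrank ℂ (V hB p) = (univ.filter fun i => p (hB.eigenvalues i)).card := by
  have h := finrank_span_eq_card (R := ℂ)
    ((hB.eigenvectorBasis.orthonormal.comp
      (Subtype.val : {i : Fin n // p (hB.eigenvalues i)} → Fin n)
      Subtype.val_injective).linearIndependent)
  rw [V]
  rw [show (Set.range fun i : {i : Fin n // p (hB.eigenvalues i)} => hB.eigenvectorBasis i)
    = Set.range (⇑hB.eigenvectorBasis ∘ Subtype.val) from rfl, h]
  simp [Fintype.card_subtype]

lemma repr_eq_zero_of_mem_V {B : Matrix (Fin n) (Fin n) ℂ} (hB : B.IsHermitian) (p : ℝ → Prop)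
    [DecidablePred p] {x : EuclideanSpace ℂ (Fin n)} (hx : x ∈ V hB p) (i : Fin n)
    (hi : ¬ p (hB.eigenvalues i)) : hB.eigenvectorBasis.repr x i = 0 := by
  induction hx using Submodule.span_induction with
  | mem y hy =>
      obtain ⟨j, rfl⟩ := hy
      rw [OrthonormalBasis.repr_self, EuclideanSpace.single_apply]
      have : (j : Fin n) ≠ i := fun h => hi (h ▸ j.2)
      simp [this.symm]
  | zero => simp
  | add y z _ _ hy hz => rw [map_add]; simp [hy, hz]
  | smul c y _ hy => rw [LinearIsometryEquiv.map_smul]; simp [hy]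

lemma norm_sq_repr {B : Matrix (Fin n) (Fin n) ℂ} (hB : B.IsHermitian)
    (x : EuclideanSpace ℂ (Fin n)) :
    ∑ i, ‖hB.eigenvectorBasis.repr x i‖ ^ 2 = ‖x‖ ^ 2 := by
  rw [← hB.eigenvectorBasis.repr.norm_map x, EuclideanSpace.norm_eq,
    Real.sq_sqrt (Finset.sum_nonneg fun i _ => sq_nonneg _)]

lemma q_le {B : Matrix (Fin n) (Fin n) ℂ} (hB : B.IsHermitian) (p : ℝ → Prop)
    [DecidablePred p] {c : ℝ} (hc : ∀ i, p (hB.eigenvalues i) → hB.eigenvalues i ≤ c)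
    {x : EuclideanSpace ℂ (Fin n)} (hx : x ∈ V hB p) : q B x ≤ c * ‖x‖ ^ 2 := by
  rw [q_eq_sum hB, ← norm_sq_repr hB x, Finset.mul_sum]
  refine Finset.sum_le_sum fun i _ => ?_
  by_cases hp : p (hB.eigenvalues i)
  · exact mul_le_mul_of_nonneg_right (hc i hp) (sq_nonneg _)
  · rw [repr_eq_zero_of_mem_V hB p hx i hp]; simp

lemma q_ge {B : Matrix (Fin n) (Fin n) ℂ} (hB : B.IsHermitian) (p : ℝ → Prop)
    [DecidablePred p] {c : ℝ} (hc : ∀ i, p (hB.eigenvalues i) → c ≤ hB.eigenvalues i)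
    {x : EuclideanSpace ℂ (Fin n)} (hx : x ∈ V hB p) : c * ‖x‖ ^ 2 ≤ q B x := by
  rw [q_eq_sum hB, ← norm_sq_repr hB x, Finset.mul_sum]
  refine Finset.sum_le_sum fun i _ => ?_
  by_cases hp : p (hB.eigenvalues i)
  · exact mul_le_mul_of_nonneg_right (hc i hp) (sq_nonneg _)
  · rw [repr_eq_zero_of_mem_V hB p hx i hp]; simp

lemma coord_norm_le (x : EuclideanSpace ℂ (Fin n)) (i : Fin n) : ‖x i‖ ≤ ‖x‖ := by
  rw [EuclideanSpace.norm_eq]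
  have h1 : ‖x i‖ ^ 2 ≤ ∑ j, ‖x j‖ ^ 2 :=
    Finset.single_le_sum (fun j _ => sq_nonneg ‖x j‖) (mem_univ i)
  calc ‖x i‖ = Real.sqrt (‖x i‖ ^ 2) := (Real.sqrt_sq (norm_nonneg _)).symm
    _ ≤ _ := Real.sqrt_le_sqrt h1

lemma inner_toEuclideanLin (D : Matrix (Fin n) (Fin n) ℂ) (x : EuclideanSpace ℂ (Fin n)) :
    (inner (𝕜 := ℂ) x (Matrix.toEuclideanLin D x)) = ∑ i, conj (x i) * ∑ j, D i j * x j := by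
  rw [PiLp.inner_apply]
  refine Finset.sum_congr rfl fun i _ => ?_
  rw [Matrix.toEuclideanLin_apply]
  simp [Matrix.mulVec, dotProduct, mul_comm]

lemma abs_q_sub_le (M N : Matrix (Fin n) (Fin n) ℂ) (x : EuclideanSpace ℂ (Fin n)) :
    |q M x - q N x| ≤ (∑ i, ∑ j, ‖(M - N) i j‖) * ‖x‖ ^ 2 := by
  have hD : q M x - q N x = (inner (𝕜 := ℂ) x (Matrix.toEuclideanLin (M - N) x)).re := by
    rw [map_sub, LinearMap.sub_apply, inner_sub_right, Complex.sub_re, q, q]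
  rw [hD]
  calc |(inner (𝕜 := ℂ) x (Matrix.toEuclideanLin (M - N) x)).re|
      ≤ ‖(inner (𝕜 := ℂ) x (Matrix.toEuclideanLin (M - N) x))‖ := by
        exact Complex.abs_re_le_norm _
    _ = ‖∑ i, conj (x i) * ∑ j, (M - N) i j * x j‖ := by rw [inner_toEuclideanLin]
    _ ≤ ∑ i, ‖conj (x i) * ∑ j, (M - N) i j * x j‖ := norm_sum_le _ _
    _ ≤ ∑ i, ∑ j, ‖(M - N) i j‖ * ‖x‖ ^ 2 := ?_
    _ = (∑ i, ∑ j, ‖(M - N) i j‖) * ‖x‖ ^ 2 := by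
        rw [Finset.sum_mul]
        exact Finset.sum_congr rfl fun i _ => by rw [Finset.sum_mul]
  refine Finset.sum_le_sum fun i _ => ?_
  calc ‖conj (x i) * ∑ j, (M - N) i j * x j‖
      = ‖x i‖ * ‖∑ j, (M - N) i j * x j‖ := by rw [norm_mul, RCLike.norm_conj]
    _ ≤ ‖x‖ * ∑ j, ‖(M - N) i j‖ * ‖x‖ := by
        refine mul_le_mul (coord_norm_le x i) ((norm_sum_le _ _).trans
          (Finset.sum_le_sum fun j _ => ?_)) (norm_nonneg _) (norm_nonneg _)
        rw [norm_mul]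
        exact mul_le_mul_of_nonneg_left (coord_norm_le x j) (norm_nonneg _)
    _ = ∑ j, ‖(M - N) i j‖ * ‖x‖ ^ 2 := by
        rw [Finset.mul_sum]
        exact Finset.sum_congr rfl fun j _ => by ring

lemma finrank_add_le_of_inf_eq_bot (V1 V2 : Submodule ℂ (EuclideanSpace ℂ (Fin n)))
    (h : V1 ⊓ V2 = ⊥) : Module.finrank ℂ V1 + Module.finrank ℂ V2 ≤ n := by
  have h2 := Submodule.finrank_sup_add_finrank_inf_eq V1 V2
  rw [h, finrank_bot, add_zero] at h2
  rw [← h2]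
  calc Module.finrank ℂ ↥(V1 ⊔ V2) ≤ Module.finrank ℂ (EuclideanSpace ℂ (Fin n)) :=
        Submodule.finrank_le _
    _ = n := finrank_euclideanSpace_fin

lemma card_neg_add_card_nonneg {C : Matrix (Fin n) (Fin n) ℂ} (hC : C.IsHermitian) :
    (univ.filter fun i => hC.eigenvalues i < 0).card
      + (univ.filter fun i => 0 ≤ hC.eigenvalues i).card = n := by
  have h := Finset.card_filter_add_card_filter_not
    (s := (univ : Finset (Fin n))) (p := fun i => hC.eigenvalues i < 0)
  simp only [not_lt, Finset.card_univ, Fintype.card_fin] at h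
  exact h

lemma card_pos_add_card_nonpos {C : Matrix (Fin n) (Fin n) ℂ} (hC : C.IsHermitian) :
    (univ.filter fun i => 0 < hC.eigenvalues i).card
      + (univ.filter fun i => hC.eigenvalues i ≤ 0).card = n := by
  have h := Finset.card_filter_add_card_filter_not
    (s := (univ : Finset (Fin n))) (p := fun i => 0 < hC.eigenvalues i)
  simp only [not_lt, Finset.card_univ, Fintype.card_fin] at h
  exact h

lemma card_le_card_neg {B C : Matrix (Fin n) (Fin n) ℂ} (hB : B.IsHermitian)
    (hC : C.IsHermitian)
    (h : ∀ x ∈ V hB (fun a => a < 0), x ≠ 0 → q C x < 0) :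
    (univ.filter fun i => hB.eigenvalues i < 0).card ≤
      (univ.filter fun i => hC.eigenvalues i < 0).card := by
  have hdisj : V hB (fun a => a < 0) ⊓ V hC (fun a => 0 ≤ a) = ⊥ := by
    rw [Submodule.eq_bot_iff]
    intro x hx
    by_contra hne
    have h1 := h x hx.1 hne
    have h2 : (0 : ℝ) * ‖x‖ ^ 2 ≤ q C x := q_ge hC (fun a => 0 ≤ a) (fun i hi => hi) hx.2
    rw [zero_mul] at h2
    linarith
  have hle := finrank_add_le_of_inf_eq_bot _ _ hdisj
  rw [finrank_V, finrank_V] at hle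
  have hc := card_neg_add_card_nonneg hC
  omega

lemma card_le_card_pos {B C : Matrix (Fin n) (Fin n) ℂ} (hB : B.IsHermitian)
    (hC : C.IsHermitian)
    (h : ∀ x ∈ V hB (fun a => 0 < a), x ≠ 0 → 0 < q C x) :
    (univ.filter fun i => 0 < hB.eigenvalues i).card ≤
      (univ.filter fun i => 0 < hC.eigenvalues i).card := by
  have hdisj : V hB (fun a => 0 < a) ⊓ V hC (fun a => a ≤ 0) = ⊥ := by
    rw [Submodule.eq_bot_iff]
    intro x hx
    by_contra hne
    have h1 := h x hx.1 hne
    have h2 : q C x ≤ (0 : ℝ) * ‖x‖ ^ 2 := q_le hC (fun a => a ≤ 0) (fun i hi => hi) hx.2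
    rw [zero_mul] at h2
    linarith
  have hle := finrank_add_le_of_inf_eq_bot _ _ hdisj
  rw [finrank_V, finrank_V] at hle
  have hc := card_pos_add_card_nonpos hC
  omega

lemma rank_split {B : Matrix (Fin n) (Fin n) ℂ} (hB : B.IsHermitian) :
    B.rank = (univ.filter fun i => hB.eigenvalues i < 0).card
      + (univ.filter fun i => 0 < hB.eigenvalues i).card := by
  rw [hB.rank_eq_card_non_zero_eigs, Fintype.card_subtype]
  rw [show (univ.filter fun i => hB.eigenvalues i ≠ 0)
      = (univ.filter fun i => hB.eigenvalues i < 0) ∪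
        (univ.filter fun i => 0 < hB.eigenvalues i) by
    rw [← Finset.filter_or]
    exact Finset.filter_congr fun i _ => ne_iff_lt_or_gt]
  rw [Finset.card_union_of_disjoint]
  rw [Finset.disjoint_filter]
  intro i _ h1
  exact not_lt.mpr h1.le

end Stmt11
/-- If `A : [0,1] → Hermitian n×n matrices` is continuous with constant
rank, then the number of negative eigenvalues of `A t` (with multiplicity) is constant. -/
theorem stmt11 {n : ℕ} (A : ℝ → Matrix (Fin n) (Fin n) ℂ)
    (hA : ∀ t, (A t).IsHermitian)
    (hcont : ContinuousOn A (Set.Icc (0 : ℝ) 1))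
    (r : ℕ) (hrank : ∀ t ∈ Set.Icc (0 : ℝ) 1, (A t).rank = r) :
    ∀ s ∈ Set.Icc (0 : ℝ) 1, ∀ t ∈ Set.Icc (0 : ℝ) 1,
      (Finset.univ.filter fun i => (hA s).eigenvalues i < 0).card =
      (Finset.univ.filter fun i => (hA t).eigenvalues i < 0).card := by
  classical
  set f : ℝ → ℕ := fun u =>
    (Finset.univ.filter fun i => (hA u).eigenvalues i < 0).card with hf
  set g : ℝ → ℕ := fun u =>
    (Finset.univ.filter fun i => 0 < (hA u).eigenvalues i).card with hg
  have key : ∀ s ∈ Set.Icc (0:ℝ) 1, ∀ᶠ t in nhdsWithin s (Set.Icc (0:ℝ) 1), f t = f s := by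
    intro s hs
    set F : Finset ℝ := insert (1:ℝ)
      ((Finset.univ.filter fun i => (hA s).eigenvalues i ≠ 0).image
        fun i => |(hA s).eigenvalues i|) with hF
    set δ : ℝ := F.min' (Finset.insert_nonempty _ _) with hδ
    have hδpos : 0 < δ := by
      rw [hδ, Finset.lt_min'_iff]
      intro b hb
      rw [hF, Finset.mem_insert] at hb
      rcases hb with rfl | hb
      · exact one_pos
      · obtain ⟨i, hi, rfl⟩ := Finset.mem_image.mp hb
        exact abs_pos.mpr (Finset.mem_filter.mp hi).2
    have hδle : ∀ i, (hA s).eigenvalues i ≠ 0 → δ ≤ |(hA s).eigenvalues i| := by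
      intro i hi
      exact Finset.min'_le _ _ (Finset.mem_insert_of_mem
        (Finset.mem_image_of_mem _ (Finset.mem_filter.mpr ⟨Finset.mem_univ i, hi⟩)))
    have hgcon : ContinuousOn (fun u => ∑ i, ∑ j, ‖A u i j - A s i j‖)
        (Set.Icc (0:ℝ) 1) := by
      apply continuousOn_finset_sum
      intro i _
      apply continuousOn_finset_sum
      intro j _
      have h1 : ContinuousOn (fun u => A u i j) (Set.Icc (0:ℝ) 1) :=
        (continuous_apply j).comp_continuousOn
          ((continuous_apply i).comp_continuousOn hcont)
      exact (h1.sub continuousOn_const).norm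
    have htend : Filter.Tendsto (fun u => ∑ i, ∑ j, ‖A u i j - A s i j‖)
        (nhdsWithin s (Set.Icc (0:ℝ) 1)) (nhds 0) := by
      have h0 : (∑ i, ∑ j, ‖A s i j - A s i j‖ : ℝ) = 0 := by simp
      have h1 := hgcon s hs
      rw [ContinuousWithinAt, h0] at h1
      exact h1
    have hev : ∀ᶠ t in nhdsWithin s (Set.Icc (0:ℝ) 1),
        (∑ i, ∑ j, ‖A t i j - A s i j‖) < δ/2 :=
      htend.eventually_lt_const (half_pos hδpos)
    filter_upwards [hev, self_mem_nhdsWithin] with t hgt ht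
    have hqd : ∀ x : EuclideanSpace ℂ (Fin n),
        |Stmt11.q (A t) x - Stmt11.q (A s) x| ≤ δ/2 * ‖x‖^2 := by
      intro x
      refine (Stmt11.abs_q_sub_le (A t) (A s) x).trans ?_
      refine mul_le_mul_of_nonneg_right (le_of_lt ?_) (sq_nonneg _)
      simpa [Matrix.sub_apply] using hgt
    have hneg : f s ≤ f t := by
      apply Stmt11.card_le_card_neg (hA s) (hA t)
      intro x hx hxne
      have h1 : Stmt11.q (A s) x ≤ -δ * ‖x‖^2 := by
        refine Stmt11.q_le (hA s) _ (fun i hi => ?_) hx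
        have h2 := hδle i (ne_of_lt hi)
        rw [abs_of_neg hi] at h2
        linarith
      have h2 := (abs_le.mp (hqd x)).2
      have hx2 : 0 < ‖x‖^2 := pow_pos (norm_pos_iff.mpr hxne) 2
      nlinarith
    have hpos : g s ≤ g t := by
      apply Stmt11.card_le_card_pos (hA s) (hA t)
      intro x hx hxne
      have h1 : δ * ‖x‖^2 ≤ Stmt11.q (A s) x := by
        refine Stmt11.q_ge (hA s) _ (fun i hi => ?_) hx
        have h2 := hδle i (ne_of_gt hi)
        rw [abs_of_pos hi] at h2
        linarith
      have h2 := (abs_le.mp (hqd x)).1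
      have hx2 : 0 < ‖x‖^2 := pow_pos (norm_pos_iff.mpr hxne) 2
      nlinarith
    have hr1 := Stmt11.rank_split (hA s)
    have hr2 := Stmt11.rank_split (hA t)
    rw [hrank s hs] at hr1
    rw [hrank t ht] at hr2
    have hfs : f s + g s = r := hr1.symm
    have hft : f t + g t = r := hr2.symm
    omega
  have hcont' : ContinuousOn f (Set.Icc (0:ℝ) 1) := fun s hs =>
    (Filter.tendsto_pure.mpr (key s hs)).mono_right (pure_le_nhds _)
  intro s hs t ht
  exact (isPreconnected_Icc.image f hcont').subsingleton
    (Set.mem_image_of_mem f hs) (Set.mem_image_of_mem f ht)
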